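/- Let X be a Banach space admitting an equivalent strictly convex norm. Then the set of strictly convex bodies in C₀₀(X) contains a dense F_σ subset of C₀(X) in the Hausdorff metric. -/

import Mathlib

open Set Filter Metric Topology

/-- The collection of convex bodies of `X`. -/
def ConvexBodies (X : Type*) [NormedAddCommGroup X] [NormedSpace ℝ X] : Set (Set X) :=
  {B | B.Nonempty ∧ Bornology.IsBounded B ∧ IsClosed B ∧ Convex ℝ B ∧
    (interior B).Nonempty}

/-- A convex body is strictly convex if every boundary point is an extreme point. -/
def IsStrictlyConvexBody {X : Type*} [NormedAddCommGroup X] [NormedSpace ℝ X]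
    (B : Set X) : Prop :=
  ∀ x ∈ frontier B, x ∈ Set.extremePoints ℝ B

/-- `p` is an equivalent strictly convex norm on `X`: a definite, absolutely homogeneous,
subadditive functional equivalent to the original norm whose closed unit ball is a
strictly convex body. -/
def IsEquivStrictlyConvexNorm {X : Type*} [NormedAddCommGroup X] [NormedSpace ℝ X]
    (p : X → ℝ) : Prop :=
  (∀ x, p x = 0 ↔ x = 0) ∧ (∀ (a : ℝ) (x : X), p (a • x) = |a| * p x) ∧
    (∀ x y, p (x + y) ≤ p x + p y) ∧
    (∃ a b : ℝ, 0 < a ∧ 0 < b ∧ ∀ x, a * ‖x‖ ≤ p x ∧ p x ≤ b * ‖x‖) ∧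
    IsStrictlyConvexBody {z : X | p z ≤ 1}

open Pointwise

namespace SCProofAux

set_option linter.unusedSectionVars false

variable {X : Type*} [NormedAddCommGroup X] [NormedSpace ℝ X]

lemma real_le_of_forall_pos {a b : ℝ} (h : ∀ ε : ℝ, 0 < ε → a ≤ b + ε) : a ≤ b := by
  by_contra hc
  push_neg at hc
  have := h ((a - b) / 2) (by linarith)
  linarith

lemma mem_nhds_of_cb {r : ℝ} (hr : 0 < r) {A : Set X} (h : closedBall (0 : X) r ⊆ A) :
    A ∈ 𝓝 (0 : X) :=
  Filter.mem_of_superset (closedBall_mem_nhds 0 hr) h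

lemma absorbent_of_cb {r : ℝ} (hr : 0 < r) {A : Set X} (h : closedBall (0 : X) r ⊆ A) :
    Absorbent ℝ A :=
  absorbent_nhds_zero (mem_nhds_of_cb hr h)

lemma gauge_le_norm_div {r : ℝ} (hr : 0 < r) {A : Set X} (h : closedBall (0 : X) r ⊆ A) (x : X) :
    gauge A x ≤ ‖x‖ / r := by
  rw [← gauge_closedBall hr.le]
  exact gauge_mono (absorbent_of_cb hr subset_rfl) h x

/-- Gauge comparison under Hausdorff distance. -/
lemma gauge_le_of_hausdorff {r ε : ℝ} (hr : 0 < r) (hε : 0 < ε) {A B : Set X}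
    (hB : Convex ℝ B) (hAr : closedBall (0 : X) r ⊆ A) (hBr : closedBall (0 : X) r ⊆ B)
    (hd : hausdorffDist A B < ε) (hfin : EMetric.hausdorffEdist A B ≠ ⊤) (x : X) :
    gauge B x ≤ gauge A x + ε / r * (‖x‖ / r) := by
  have hAabs : Absorbent ℝ A := absorbent_of_cb hr hAr
  have hBabs : Absorbent ℝ B := absorbent_of_cb hr hBr
  have hC : (0 : ℝ) < 1 + ε / r := by positivity
  have key : ∀ η : ℝ, 0 < η → gauge B x ≤ (gauge A x + η) * (1 + ε / r) := by
    intro η hη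
    obtain ⟨b, hb0, hbl, hxb⟩ :=
      exists_lt_of_gauge_lt hAabs (lt_add_of_pos_right (gauge A x) hη)
    obtain ⟨a, ha, rfl⟩ := hxb
    obtain ⟨y, hy, hdy⟩ := exists_dist_lt_of_hausdorffDist_lt ha hd hfin
    have h1 : gauge B a ≤ 1 + ε / r := by
      have hsplit : gauge B a ≤ gauge B y + gauge B (a - y) := by
        have := gauge_add_le hB hBabs y (a - y)
        simpa using this
      have h2 : gauge B y ≤ 1 := gauge_le_one_of_mem hy
      have h3 : gauge B (a - y) ≤ ‖a - y‖ / r := gauge_le_norm_div hr hBr _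
      have h4 : ‖a - y‖ ≤ ε := by rw [← dist_eq_norm]; exact hdy.le
      have h5 : ‖a - y‖ / r ≤ ε / r := by gcongr
      linarith
    have hsm : gauge B (b • a) = b * gauge B a := by
      rw [gauge_smul_of_nonneg hb0.le, smul_eq_mul]
    rw [hsm]
    have hg0 : 0 ≤ gauge B a := gauge_nonneg _
    nlinarith
  have h5 : gauge B x ≤ gauge A x * (1 + ε / r) := by
    refine real_le_of_forall_pos fun δ hδ => ?_
    have := key (δ / (1 + ε / r)) (by positivity)
    calc gauge B x ≤ (gauge A x + δ / (1 + ε / r)) * (1 + ε / r) := this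
      _ = gauge A x * (1 + ε / r) + δ := by field_simp
  have h6 : gauge A x ≤ ‖x‖ / r := gauge_le_norm_div hr hAr x
  have h7 : 0 ≤ ε / r := by positivity
  nlinarith [gauge_nonneg (s := A) x]

/-- Gauge of a sublevel set of a positively homogeneous positive functional. -/
lemma gauge_sublevel {q : X → ℝ} (hhom : ∀ t : ℝ, 0 ≤ t → ∀ x, q (t • x) = t * q x)
    (hpos : ∀ x : X, x ≠ 0 → 0 < q x) (x : X) :
    gauge {z : X | q z ≤ 1} x = q x := by
  rcases eq_or_ne x 0 with rfl | hx
  · rw [gauge_zero]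
    have := hhom 0 le_rfl 0
    simpa using this.symm
  · have hqx : 0 < q x := hpos x hx
    rw [gauge_def]
    have hset : {r ∈ Set.Ioi (0 : ℝ) | x ∈ (r • ({z : X | q z ≤ 1} : Set X) : Set X)} = Set.Ici (q x) := by
      ext t
      simp only [Set.mem_setOf_eq, Set.mem_Ioi, Set.mem_sep_iff, Set.mem_Ici]
      constructor
      · rintro ⟨ht, hmem⟩
        rw [mem_smul_set_iff_inv_smul_mem₀ (ne_of_gt ht)] at hmem
        have : q (t⁻¹ • x) = t⁻¹ * q x := hhom t⁻¹ (by positivity) x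
        rw [Set.mem_setOf_eq, this] at hmem
        rw [inv_mul_le_one₀ ht] at hmem
        exact hmem
      · intro ht
        have ht0 : 0 < t := lt_of_lt_of_le hqx ht
        refine ⟨ht0, ?_⟩
        rw [mem_smul_set_iff_inv_smul_mem₀ (ne_of_gt ht0)]
        have : q (t⁻¹ • x) = t⁻¹ * q x := hhom t⁻¹ (by positivity) x
        rw [Set.mem_setOf_eq, this]
        rw [inv_mul_le_one₀ ht0]
        exact ht
    rw [hset, csInf_Ici]

/-- Core lemma: a closed convex set whose gauge minus a small multiple of a strictly
convex norm is subadditive, is a strictly convex body. -/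
lemma strict_of_subadd {p : X → ℝ} (hp : IsEquivStrictlyConvexNorm p)
    {c : ℝ} (hc : 0 < c) {r : ℝ} (hr : 0 < r) {D : Set X}
    (hDcl : IsClosed D) (hDconv : Convex ℝ D) (hDr : closedBall (0 : X) r ⊆ D)
    (hsub : ∀ x y : X, gauge D (x + y) - c * p (x + y) ≤
      (gauge D x - c * p x) + (gauge D y - c * p y)) :
    IsStrictlyConvexBody D := by
  obtain ⟨hp0, hph, hpadd, ⟨α, β, hα, hβ, hbd⟩, hpsc⟩ := hp
  intro x hxfr
  have hnhds : D ∈ 𝓝 (0 : X) := mem_nhds_of_cb hr hDr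
  have habs : Absorbent ℝ D := absorbent_nhds_zero hnhds
  have hμx : gauge D x = 1 := (gauge_eq_one_iff_mem_frontier hDconv hnhds).2 hxfr
  have hxD : x ∈ D := by rw [← hDcl.closure_eq]; exact hxfr.1
  rw [mem_extremePoints]
  refine ⟨hxD, ?_⟩
  intro x₁ hx₁ x₂ hx₂ hseg
  obtain ⟨a, b, ha, hb, hab, hsum⟩ := hseg
  have hμ1le : gauge D x₁ ≤ 1 := gauge_le_one_of_mem hx₁
  have hμ2le : gauge D x₂ ≤ 1 := gauge_le_one_of_mem hx₂
  have hadd := gauge_add_le hDconv habs (a • x₁) (b • x₂)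
  rw [hsum, gauge_smul_of_nonneg ha.le, gauge_smul_of_nonneg hb.le, smul_eq_mul, smul_eq_mul,
    hμx] at hadd
  have hμ1 : gauge D x₁ = 1 := le_antisymm hμ1le (by nlinarith)
  have hμ2 : gauge D x₂ = 1 := le_antisymm hμ2le (by nlinarith)
  have hS := hsub (a • x₁) (b • x₂)
  rw [hsum, gauge_smul_of_nonneg ha.le, gauge_smul_of_nonneg hb.le, smul_eq_mul, smul_eq_mul,
    hμ1, hμ2, hph a x₁, hph b x₂, abs_of_pos ha, abs_of_pos hb, hμx] at hS
  have hpx_ge : a * p x₁ + b * p x₂ ≤ p x := by nlinarith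
  have hpx_le : p x ≤ a * p x₁ + b * p x₂ := by
    have h := hpadd (a • x₁) (b • x₂)
    rwa [hsum, hph a x₁, hph b x₂, abs_of_pos ha, abs_of_pos hb] at h
  have hpx : p x = a * p x₁ + b * p x₂ := le_antisymm hpx_le hpx_ge
  have hx₁0 : x₁ ≠ 0 := by rintro rfl; rw [gauge_zero] at hμ1; norm_num at hμ1
  have hx₂0 : x₂ ≠ 0 := by rintro rfl; rw [gauge_zero] at hμ2; norm_num at hμ2
  have hn1 : 0 < ‖x₁‖ := norm_pos_iff.2 hx₁0
  have hn2 : 0 < ‖x₂‖ := norm_pos_iff.2 hx₂0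
  have hp1 : 0 < p x₁ := lt_of_lt_of_le (by positivity) (hbd x₁).1
  have hp2 : 0 < p x₂ := lt_of_lt_of_le (by positivity) (hbd x₂).1
  have hpx0 : 0 < p x := by rw [hpx]; positivity
  set w := (p x)⁻¹ • x with hw
  have hpw : p w = 1 := by
    rw [hw, hph, abs_of_pos (inv_pos.2 hpx0), inv_mul_cancel₀ (ne_of_gt hpx0)]
  have hwfr : w ∈ frontier {z : X | p z ≤ 1} := by
    constructor
    · exact subset_closure (by simp only [Set.mem_setOf_eq, hpw, le_refl])
    · intro hint
      rw [mem_interior_iff_mem_nhds, Metric.mem_nhds_iff] at hint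
      obtain ⟨δ, hδ, hball⟩ := hint
      have hw0 : w ≠ 0 := by
        intro h; rw [h, (hp0 0).2 rfl] at hpw; norm_num at hpw
      have hnw : 0 < ‖w‖ := norm_pos_iff.2 hw0
      set η := δ / (2 * ‖w‖) with hη
      have hη0 : 0 < η := by positivity
      have hmem : (1 + η) • w ∈ Metric.ball w δ := by
        rw [mem_ball, dist_eq_norm]
        have he : (1 + η) • w - w = η • w := by module
        rw [he, norm_smul, Real.norm_eq_abs, abs_of_pos hη0]
        have : η * ‖w‖ = δ / 2 := by rw [hη]; field_simp
        rw [this]; linarith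
      have hin := hball hmem
      rw [Set.mem_setOf_eq, hph, abs_of_pos (by linarith : (0:ℝ) < 1 + η), hpw, mul_one] at hin
      linarith
  have hext := hpsc w hwfr
  rw [mem_extremePoints] at hext
  have hpu : p ((p x₁)⁻¹ • x₁) = 1 := by
    rw [hph, abs_of_pos (inv_pos.2 hp1), inv_mul_cancel₀ (ne_of_gt hp1)]
  have hpv : p ((p x₂)⁻¹ • x₂) = 1 := by
    rw [hph, abs_of_pos (inv_pos.2 hp2), inv_mul_cancel₀ (ne_of_gt hp2)]
  have hu : (p x₁)⁻¹ • x₁ ∈ {z : X | p z ≤ 1} := le_of_eq hpu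
  have hv : (p x₂)⁻¹ • x₂ ∈ {z : X | p z ≤ 1} := le_of_eq hpv
  set t := a * p x₁ / p x with htdef
  have ht : 0 < t := by positivity
  have ht1 : t < 1 := by rw [htdef, div_lt_one hpx0]; nlinarith
  have h1t : 1 - t = b * p x₂ / p x := by
    rw [htdef]; field_simp; linarith [hpx]
  have hsegw : w ∈ openSegment ℝ ((p x₁)⁻¹ • x₁) ((p x₂)⁻¹ • x₂) := by
    refine ⟨t, 1 - t, ht, by linarith, by ring, ?_⟩
    have hpx0' : p (a • x₁ + b • x₂) ≠ 0 := by rw [hsum]; exact hpx0.ne'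
    rw [h1t, htdef, hw, ← hsum]
    match_scalars <;> field_simp [hp1.ne', hp2.ne', hpx0']
  obtain ⟨huw, hvw⟩ := hext.2 _ hu _ hv hsegw
  have hx1w : x₁ = p x₁ • w := by rw [← huw, smul_inv_smul₀ (ne_of_gt hp1)]
  have hx2w : x₂ = p x₂ • w := by rw [← hvw, smul_inv_smul₀ (ne_of_gt hp2)]
  have hq1 : (1 : ℝ) = p x₁ * (p x)⁻¹ := by
    have h := hμ1
    rw [hx1w, hw, smul_smul, gauge_smul_of_nonneg (by positivity), smul_eq_mul, hμx,
      mul_one] at h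
    exact h.symm
  have hq2 : (1 : ℝ) = p x₂ * (p x)⁻¹ := by
    have h := hμ2
    rw [hx2w, hw, smul_smul, gauge_smul_of_nonneg (by positivity), smul_eq_mul, hμx,
      mul_one] at h
    exact h.symm
  have hpeq1 : p x₁ = p x := by field_simp at hq1; linarith
  have hpeq2 : p x₂ = p x := by field_simp at hq2; linarith
  constructor
  · rw [hx1w, hpeq1, hw, smul_inv_smul₀ (ne_of_gt hpx0)]
  · rw [hx2w, hpeq2, hw, smul_inv_smul₀ (ne_of_gt hpx0)]

lemma p_continuous {p : X → ℝ} {β : ℝ} (hβ : 0 < β)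
    (hpadd : ∀ x y : X, p (x + y) ≤ p x + p y)
    (hub : ∀ x : X, p x ≤ β * ‖x‖) : Continuous p := by
  rw [Metric.continuous_iff]
  intro x ε hε
  refine ⟨ε / β, by positivity, fun y hy => ?_⟩
  rw [Real.dist_eq, abs_sub_lt_iff]
  have hd : dist y x = ‖y - x‖ := dist_eq_norm y x
  have h1 : p y ≤ p x + p (y - x) := by simpa using hpadd x (y - x)
  have h1' : p x ≤ p y + p (x - y) := by simpa using hpadd y (x - y)
  have h2 := hub (y - x)
  have h2' := hub (x - y)
  have hn : ‖x - y‖ = ‖y - x‖ := norm_sub_rev x y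
  have hmul : β * ‖y - x‖ < ε := by
    rw [← hd, mul_comm]
    exact (lt_div_iff₀ hβ).1 hy
  rw [hn] at h2'
  constructor <;> linarith

lemma density_construct {p : X → ℝ}
    (hph : ∀ (a : ℝ) (x : X), p (a • x) = |a| * p x)
    (hpadd : ∀ x y : X, p (x + y) ≤ p x + p y)
    {α β : ℝ} (hα : 0 < α) (hβ : 0 < β)
    (hlb : ∀ x : X, α * ‖x‖ ≤ p x) (hub : ∀ x : X, p x ≤ β * ‖x‖)
    {K : Set X} (hKcl : IsClosed K) (hKconv : Convex ℝ K)
    {δ R' : ℝ} (hδ : 0 < δ) (hR' : 0 < R')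
    (hKr : closedBall (0 : X) δ ⊆ K) (hKR : K ⊆ closedBall (0 : X) R')
    {c : ℝ} (hc : 0 < c) :
    ∃ D : Set X, IsClosed D ∧ Convex ℝ D ∧
      closedBall (0 : X) (1 / δ + c * β)⁻¹ ⊆ D ∧ D ⊆ closedBall (0 : X) R' ∧
      (∀ x y : X, gauge D (x + y) - c * p (x + y) ≤
        (gauge D x - c * p x) + (gauge D y - c * p y)) ∧
      D ⊆ K ∧ hausdorffDist K D ≤ c * β * R' ^ 2 := by
  have hpcont : Continuous p := p_continuous hβ hpadd hub
  set q : X → ℝ := fun z => gauge K z + c * p z with hq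
  have habs : Absorbent ℝ K := absorbent_of_cb hδ hKr
  have hKnhds : K ∈ 𝓝 (0 : X) := mem_nhds_of_cb hδ hKr
  have hp0 : ∀ x : X, 0 ≤ p x := fun x => le_trans (by positivity) (hlb x)
  have hqhom : ∀ t : ℝ, 0 ≤ t → ∀ x : X, q (t • x) = t * q x := by
    intro t ht x
    simp only [hq]
    rw [gauge_smul_of_nonneg ht, smul_eq_mul, hph, abs_of_nonneg ht]
    ring
  have hqpos : ∀ x : X, x ≠ 0 → 0 < q x := by
    intro x hx
    have hn : 0 < ‖x‖ := norm_pos_iff.2 hx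
    have h1 := hlb x
    have h2 : (0 : ℝ) ≤ gauge K x := gauge_nonneg x
    have h3 : 0 < c * p x := mul_pos hc (lt_of_lt_of_le (mul_pos hα hn) h1)
    simp only [hq]
    linarith
  set D := {z : X | q z ≤ 1} with hD
  have hgD : ∀ x, gauge D x = q x := gauge_sublevel hqhom hqpos
  have hqcont : Continuous q := by
    simp only [hq]
    exact (continuous_gauge hKconv hKnhds).add (continuous_const.mul hpcont)
  have hDcl : IsClosed D := by
    have h : D = q ⁻¹' (Set.Iic 1) := rfl
    rw [h]
    exact IsClosed.preimage hqcont isClosed_Iic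
  have hqsub : ∀ x y : X, q (x + y) ≤ q x + q y := by
    intro x y
    simp only [hq]
    have h1 := gauge_add_le hKconv habs x y
    have h2 := hpadd x y
    nlinarith
  have hDconv : Convex ℝ D := by
    intro x hx y hy a b ha hb hab
    simp only [hD, Set.mem_setOf_eq] at hx hy ⊢
    calc q (a • x + b • y) ≤ q (a • x) + q (b • y) := hqsub _ _
      _ = a * q x + b * q y := by rw [hqhom a ha, hqhom b hb]
      _ ≤ a * 1 + b * 1 := by gcongr
      _ = 1 := by linarith
  have hDK : D ⊆ K := by
    intro z hz
    have hz' : q z ≤ 1 := hz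
    have h1 : gauge K z ≤ 1 := by
      have h2 := hp0 z
      simp only [hq] at hz'
      nlinarith
    rw [← hKcl.closure_eq]
    exact (gauge_le_one_iff_mem_closure hKconv hKnhds).1 h1
  have hDR : D ⊆ closedBall (0 : X) R' := hDK.trans hKR
  have hDr : closedBall (0 : X) (1 / δ + c * β)⁻¹ ⊆ D := by
    intro z hz
    rw [mem_closedBall, dist_zero_right] at hz
    show q z ≤ 1
    have h1 : gauge K z ≤ ‖z‖ / δ := gauge_le_norm_div hδ hKr z
    have h2 : p z ≤ β * ‖z‖ := hub z
    have hpos : (0 : ℝ) < 1 / δ + c * β := by positivity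
    have h3 : q z ≤ (1 / δ + c * β) * ‖z‖ := by
      simp only [hq]
      have : ‖z‖ / δ = 1 / δ * ‖z‖ := by ring
      nlinarith
    calc q z ≤ (1 / δ + c * β) * ‖z‖ := h3
      _ ≤ (1 / δ + c * β) * (1 / δ + c * β)⁻¹ := by gcongr
      _ = 1 := mul_inv_cancel₀ hpos.ne'
  have hsubadd : ∀ x y : X, gauge D (x + y) - c * p (x + y) ≤
      (gauge D x - c * p x) + (gauge D y - c * p y) := by
    intro x y
    simp only [hgD, hq]
    have h1 := gauge_add_le hKconv habs x y
    linarith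
  have hdist : hausdorffDist K D ≤ c * β * R' ^ 2 := by
    refine hausdorffDist_le_of_infDist (by positivity) ?_ ?_
    · intro x hxK
      set t := 1 + c * p x with htd
      have hp0x := hp0 x
      have ht1 : 1 ≤ t := by nlinarith
      have ht0 : 0 < t := by linarith
      have hyD : t⁻¹ • x ∈ D := by
        show q (t⁻¹ • x) ≤ 1
        rw [hqhom t⁻¹ (by positivity)]
        have hqx : q x ≤ t := by
          simp only [hq, htd]
          have h1 : gauge K x ≤ 1 := gauge_le_one_of_mem hxK
          linarith
        calc t⁻¹ * q x ≤ t⁻¹ * t :=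
              mul_le_mul_of_nonneg_left hqx (by positivity)
          _ = 1 := inv_mul_cancel₀ ht0.ne'
      refine le_trans (infDist_le_dist_of_mem hyD) ?_
      rw [dist_eq_norm]
      have he : x - t⁻¹ • x = (1 - t⁻¹) • x := by module
      have hinv1 : t⁻¹ ≤ 1 := by
        rw [inv_le_one_iff₀]; right; exact ht1
      rw [he, norm_smul, Real.norm_eq_abs, abs_of_nonneg (by linarith : (0:ℝ) ≤ 1 - t⁻¹)]
      have hxR : ‖x‖ ≤ R' := by
        have h := hKR hxK
        rwa [mem_closedBall, dist_zero_right] at h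
      have hti : t * t⁻¹ = 1 := mul_inv_cancel₀ ht0.ne'
      have hinv : 1 - t⁻¹ ≤ t - 1 := by nlinarith [sq_nonneg (t - 1), inv_pos.2 ht0]
      have ht_1 : t - 1 = c * p x := by rw [htd]; ring
      have hpxb : p x ≤ β * R' := le_trans (hub x) (by nlinarith)
      have h0 : (0:ℝ) ≤ ‖x‖ := norm_nonneg x
      have hprod : p x * ‖x‖ ≤ (β * R') * R' := mul_le_mul hpxb hxR h0 (by positivity)
      calc (1 - t⁻¹) * ‖x‖ ≤ (t - 1) * ‖x‖ :=
            mul_le_mul_of_nonneg_right hinv h0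
        _ = c * (p x * ‖x‖) := by rw [ht_1]; ring
        _ ≤ c * ((β * R') * R') := mul_le_mul_of_nonneg_left hprod hc.le
        _ = c * β * R' ^ 2 := by ring
    · intro x hxD
      have : infDist x K ≤ dist x x := infDist_le_dist_of_mem (hDK hxD)
      simp only [dist_self] at this
      have hb : (0:ℝ) ≤ c * β * R' ^ 2 := by positivity
      linarith
  exact ⟨D, hDcl, hDconv, hDr, hDR, hsubadd, hDK, hdist⟩

end SCProofAux

set_option maxHeartbeats 1000000 in
/-- If a Banach space `X` admits an equivalent strictly convex norm,
then the set of strictly convex bodies in `C₀₀(X)` contains a subset that is `F_σ`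
(a countable union of sets closed in `C₀(X)` for the Hausdorff metric) and dense in
`C₀(X)`. -/
theorem strictly_convex_bodies_contain_dense_Fsigma
    {X : Type*} [NormedAddCommGroup X] [NormedSpace ℝ X] [CompleteSpace X]
    (hnorm : ∃ p : X → ℝ, IsEquivStrictlyConvexNorm p) :
    ∃ S : Set (Set X),
      S ⊆ {B ∈ ConvexBodies X | (0 : X) ∈ interior B ∧ IsStrictlyConvexBody B} ∧
      (∃ F : ℕ → Set (Set X), S = ⋃ n, F n ∧
        ∀ n, F n ⊆ {B ∈ ConvexBodies X | (0 : X) ∈ B} ∧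
          ∀ B ∈ {B ∈ ConvexBodies X | (0 : X) ∈ B},
            (∀ ε > (0 : ℝ), ∃ D ∈ F n, Metric.hausdorffDist B D < ε) → B ∈ F n) ∧
      ∀ B ∈ {B ∈ ConvexBodies X | (0 : X) ∈ B}, ∀ ε > (0 : ℝ),
        ∃ D ∈ S, Metric.hausdorffDist B D < ε := by
  classical
  obtain ⟨p, hp⟩ := hnorm
  obtain ⟨hp0, hph, hpadd, ⟨α, β, hα, hβ, hbd⟩, hpsc⟩ := id hp
  have hlb : ∀ x : X, α * ‖x‖ ≤ p x := fun x => (hbd x).1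
  have hub : ∀ x : X, p x ≤ β * ‖x‖ := fun x => (hbd x).2
  set F : ℕ → Set (Set X) := fun n =>
    {D | IsClosed D ∧ Convex ℝ D ∧ closedBall (0 : X) (((n : ℝ) + 1))⁻¹ ⊆ D ∧
      D ⊆ closedBall (0 : X) ((n : ℝ) + 1) ∧
      ∀ x y : X, gauge D (x + y) - ((n : ℝ) + 1)⁻¹ ^ 3 * p (x + y) ≤
        (gauge D x - ((n : ℝ) + 1)⁻¹ ^ 3 * p x) +
          (gauge D y - ((n : ℝ) + 1)⁻¹ ^ 3 * p y)} with hF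
  have hrpos : ∀ n : ℕ, (0 : ℝ) < ((n : ℝ) + 1)⁻¹ := fun n => by positivity
  have hcpos : ∀ n : ℕ, (0 : ℝ) < ((n : ℝ) + 1)⁻¹ ^ 3 := fun n => by positivity
  -- every member of F n is a strictly convex body with 0 in the interior
  have hgood : ∀ n : ℕ, ∀ D ∈ F n,
      D ∈ ConvexBodies X ∧ (0 : X) ∈ interior D ∧ IsStrictlyConvexBody D := by
    intro n D hD
    obtain ⟨hDcl, hDconv, hDr, hDR, hDsub⟩ := hD
    have hr := hrpos n
    have h0int : (0 : X) ∈ interior D :=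
      mem_interior_iff_mem_nhds.2 (SCProofAux.mem_nhds_of_cb hr hDr)
    refine ⟨⟨⟨0, hDr (mem_closedBall_self hr.le)⟩, isBounded_closedBall.subset hDR, hDcl,
      hDconv, ⟨0, h0int⟩⟩, h0int, ?_⟩
    exact SCProofAux.strict_of_subadd hp (hcpos n) hr hDcl hDconv hDr hDsub
  -- each F n is closed under Hausdorff approximation within C₀
  have hclosed : ∀ n : ℕ, ∀ B ∈ {B ∈ ConvexBodies X | (0 : X) ∈ B},
      (∀ ε > (0 : ℝ), ∃ D ∈ F n, Metric.hausdorffDist B D < ε) → B ∈ F n := by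
    intro n B hB happ
    obtain ⟨⟨hBne, hBbd, hBcl, hBconv, hBint⟩, h0B⟩ := hB
    have hr := hrpos n
    set r := ((n : ℝ) + 1)⁻¹ with hrdef
    have hfin : ∀ D ∈ F n, EMetric.hausdorffEdist B D ≠ ⊤ := by
      intro D hD
      obtain ⟨_, _, hDr, hDR, _⟩ := hD
      exact hausdorffEdist_ne_top_of_nonempty_of_bounded hBne
        ⟨0, hDr (mem_closedBall_self hr.le)⟩ hBbd (isBounded_closedBall.subset hDR)
    have hBr : closedBall (0 : X) r ⊆ B := by
      intro x hx
      have key : ∀ ε > (0 : ℝ), infDist x B < ε := by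
        intro ε hε
        obtain ⟨D, hD, hdist⟩ := happ ε hε
        obtain ⟨_, _, hDr, _, _⟩ := id hD
        obtain ⟨z, hzB, hz⟩ :=
          exists_dist_lt_of_hausdorffDist_lt' (hDr hx) hdist (hfin D hD)
        have h1 : infDist x B ≤ dist x z := infDist_le_dist_of_mem hzB
        rw [dist_comm] at h1
        linarith
      have h0 : infDist x B = 0 :=
        le_antisymm (SCProofAux.real_le_of_forall_pos fun ε hε => by
          linarith [key ε hε]) infDist_nonneg
      have hmem := (mem_closure_iff_infDist_zero hBne).2 h0
      rwa [hBcl.closure_eq] at hmem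
    have hBR : B ⊆ closedBall (0 : X) ((n : ℝ) + 1) := by
      intro x hx
      rw [mem_closedBall, dist_zero_right]
      refine SCProofAux.real_le_of_forall_pos fun ε hε => ?_
      obtain ⟨D, hD, hdist⟩ := happ ε hε
      obtain ⟨_, _, _, hDR, _⟩ := id hD
      obtain ⟨y, hyD, hxy⟩ :=
        exists_dist_lt_of_hausdorffDist_lt hx hdist (hfin D hD)
      have hyR : ‖y‖ ≤ (n : ℝ) + 1 := by
        have h := hDR hyD
        rwa [mem_closedBall, dist_zero_right] at h
      have htri : ‖x‖ ≤ ‖y‖ + ‖x - y‖ := by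
        have he : y + (x - y) = x := by abel
        calc ‖x‖ = ‖y + (x - y)‖ := by rw [he]
          _ ≤ ‖y‖ + ‖x - y‖ := norm_add_le _ _
      have hd : ‖x - y‖ = dist x y := (dist_eq_norm x y).symm
      linarith
    refine ⟨hBcl, hBconv, hBr, hBR, ?_⟩
    intro x y
    refine SCProofAux.real_le_of_forall_pos fun δ hδ => ?_
    obtain ⟨M, hM0, hM⟩ : ∃ M : ℝ, 0 < M ∧ M = (‖x + y‖ + ‖x‖ + ‖y‖) / r ^ 2 + 1 :=
      ⟨_, by positivity, rfl⟩
    obtain ⟨ε, hε0, hεdef⟩ : ∃ e : ℝ, 0 < e ∧ e = δ / M := ⟨_, by positivity, rfl⟩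
    obtain ⟨D, hD, hdist⟩ := happ ε hε0
    obtain ⟨hDcl, hDconv, hDr, hDR, hDsub⟩ := hD
    have hfinD := hfin D ⟨hDcl, hDconv, hDr, hDR, hDsub⟩
    have hfinD' : EMetric.hausdorffEdist D B ≠ ⊤ := by
      rw [EMetric.hausdorffEdist, Metric.hausdorffEDist_comm] at hfinD; exact hfinD
    have hdist' : hausdorffDist D B < ε := by rwa [hausdorffDist_comm] at hdist
    have h1 : gauge B (x + y) ≤ gauge D (x + y) + ε / r * (‖x + y‖ / r) :=
      SCProofAux.gauge_le_of_hausdorff hr hε0 hBconv hDr hBr hdist' hfinD' _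
    have h2 : gauge D x ≤ gauge B x + ε / r * (‖x‖ / r) :=
      SCProofAux.gauge_le_of_hausdorff hr hε0 hDconv hBr hDr hdist hfinD _
    have h3 : gauge D y ≤ gauge B y + ε / r * (‖y‖ / r) :=
      SCProofAux.gauge_le_of_hausdorff hr hε0 hDconv hBr hDr hdist hfinD _
    have h4 := hDsub x y
    have hrne : r ≠ 0 := hr.ne'
    have hsumeq : ε / r * (‖x + y‖ / r) + ε / r * (‖x‖ / r) + ε / r * (‖y‖ / r)
        = ε * (M - 1) := by
      rw [hM]
      field_simp
      ring
    have herr : ε * (M - 1) ≤ δ := by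
      rw [hεdef, div_mul_eq_mul_div, div_le_iff₀ hM0]
      nlinarith
    linarith
  -- density
  have hdense : ∀ B ∈ {B ∈ ConvexBodies X | (0 : X) ∈ B}, ∀ ε > (0 : ℝ),
      ∃ D ∈ ⋃ n, F n, Metric.hausdorffDist B D < ε := by
    intro B hB ε hε
    obtain ⟨⟨hBne, hBbd, hBcl, hBconv, hBint⟩, h0B⟩ := hB
    obtain ⟨δ, hδ, hδdef⟩ : ∃ d : ℝ, 0 < d ∧ d = ε / 4 := ⟨_, by positivity, rfl⟩
    set K := cthickening δ B with hK
    have hKcl : IsClosed K := isClosed_cthickening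
    have hKconv : Convex ℝ K := hBconv.cthickening δ
    have hKr : closedBall (0 : X) δ ⊆ K := by
      intro z hz
      rw [mem_closedBall, dist_zero_right] at hz
      rw [hK, mem_cthickening_iff]
      calc EMetric.infEdist z B ≤ edist z 0 := EMetric.infEdist_le_edist_of_mem h0B
        _ = ENNReal.ofReal (dist z 0) := edist_dist z 0
        _ ≤ ENNReal.ofReal δ := by
            apply ENNReal.ofReal_le_ofReal
            rwa [dist_zero_right]
    obtain ⟨R0, hR0⟩ := (Metric.isBounded_iff_subset_closedBall (0 : X)).1 hBbd
    obtain ⟨R', hR', hR'def⟩ : ∃ R' : ℝ, 0 < R' ∧ R' = max R0 0 + δ + 1 :=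
      ⟨_, by positivity, rfl⟩
    have hKR : K ⊆ closedBall (0 : X) R' := by
      intro z hz
      rw [hK, mem_cthickening_iff] at hz
      have hzd : infDist z B ≤ δ := by
        show (EMetric.infEdist z B).toReal ≤ δ
        have h := ENNReal.toReal_mono (by simp : ENNReal.ofReal δ ≠ ⊤) hz
        rwa [ENNReal.toReal_ofReal hδ.le] at h
      obtain ⟨y, hyB, hzy⟩ := (infDist_lt_iff hBne).1
        (lt_of_le_of_lt hzd (by linarith : δ < δ + 1))
      have hyR : ‖y‖ ≤ max R0 0 := by
        have h := hR0 hyB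
        rw [mem_closedBall, dist_zero_right] at h
        exact le_trans h (le_max_left _ _)
      rw [mem_closedBall, dist_zero_right]
      have htri : ‖z‖ ≤ ‖y‖ + ‖z - y‖ := by
        have he : y + (z - y) = z := by abel
        calc ‖z‖ = ‖y + (z - y)‖ := by rw [he]
          _ ≤ ‖y‖ + ‖z - y‖ := norm_add_le _ _
      have hd : ‖z - y‖ = dist z y := (dist_eq_norm z y).symm
      rw [hR'def]
      linarith
    have hdBK : hausdorffDist B K ≤ δ := by
      refine hausdorffDist_le_of_infDist hδ.le ?_ ?_
      · intro z hz
        have hzK : z ∈ K := self_subset_cthickening _ hz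
        have h : infDist z K ≤ dist z z := infDist_le_dist_of_mem hzK
        simp only [dist_self] at h
        linarith
      · intro z hz
        rw [hK, mem_cthickening_iff] at hz
        show (EMetric.infEdist z B).toReal ≤ δ
        have h := ENNReal.toReal_mono (by simp : ENNReal.ofReal δ ≠ ⊤) hz
        rwa [ENNReal.toReal_ofReal hδ.le] at h
    obtain ⟨n, hn⟩ := exists_nat_gt (max (max (1 / δ + β) R') (2 * β * R' ^ 2 / ε))
    have hn1 : 1 / δ + β < (n : ℝ) + 1 := by
      have h := le_trans (le_max_left (1 / δ + β) R')
        (le_max_left (max (1 / δ + β) R') (2 * β * R' ^ 2 / ε))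
      linarith
    have hn2 : R' ≤ (n : ℝ) + 1 := by
      have h := le_trans (le_max_right (1 / δ + β) R')
        (le_max_left (max (1 / δ + β) R') (2 * β * R' ^ 2 / ε))
      linarith
    have hn3 : 2 * β * R' ^ 2 / ε < (n : ℝ) + 1 := by
      have h := le_max_right (max (1 / δ + β) R') (2 * β * R' ^ 2 / ε)
      linarith
    have hc0 : (0 : ℝ) < ((n : ℝ) + 1)⁻¹ ^ 3 := hcpos n
    obtain ⟨D, hDcl, hDconv, hDr, hDR, hDsub, hDK, hDdist⟩ :=
      SCProofAux.density_construct (c := ((n : ℝ) + 1)⁻¹ ^ 3) hph hpadd hα hβ hlb hub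
        hKcl hKconv hδ hR' hKr hKR hc0
    have hN : (0 : ℝ) < (n : ℝ) + 1 := by positivity
    have hNinv1 : ((n : ℝ) + 1)⁻¹ ≤ 1 := by
      rw [inv_le_one_iff₀]; right; linarith
    have hcle : ((n : ℝ) + 1)⁻¹ ^ 3 ≤ ((n : ℝ) + 1)⁻¹ :=
      pow_le_of_le_one (by positivity) hNinv1 (by norm_num)
    have hball : closedBall (0 : X) (((n : ℝ) + 1))⁻¹ ⊆ D := by
      refine subset_trans (closedBall_subset_closedBall ?_) hDr
      have hle : 1 / δ + ((n : ℝ) + 1)⁻¹ ^ 3 * β ≤ (n : ℝ) + 1 := by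
        have h1 : ((n : ℝ) + 1)⁻¹ ^ 3 * β ≤ 1 * β :=
          mul_le_mul_of_nonneg_right (le_trans hcle hNinv1) hβ.le
        linarith
      have hpos : (0 : ℝ) < 1 / δ + ((n : ℝ) + 1)⁻¹ ^ 3 * β := by positivity
      exact inv_anti₀ hpos hle
    have hDR' : D ⊆ closedBall (0 : X) ((n : ℝ) + 1) :=
      hDR.trans (closedBall_subset_closedBall hn2)
    have hDF : D ∈ F n := ⟨hDcl, hDconv, hball, hDR', hDsub⟩
    refine ⟨D, mem_iUnion.2 ⟨n, hDF⟩, ?_⟩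
    have hKne : K.Nonempty := ⟨0, hKr (mem_closedBall_self hδ.le)⟩
    have hKbd : Bornology.IsBounded K := isBounded_closedBall.subset hKR
    have hfinBK : EMetric.hausdorffEdist B K ≠ ⊤ :=
      hausdorffEdist_ne_top_of_nonempty_of_bounded hBne hKne hBbd hKbd
    have htri : hausdorffDist B D ≤ hausdorffDist B K + hausdorffDist K D :=
      hausdorffDist_triangle hfinBK
    have h2' : 2 * β * R' ^ 2 < ((n : ℝ) + 1) * ε := by
      rw [div_lt_iff₀ hε] at hn3
      linarith
    have hcb : ((n : ℝ) + 1)⁻¹ ^ 3 * β * R' ^ 2 < ε / 2 := by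
      have hmono : ((n : ℝ) + 1)⁻¹ ^ 3 * (β * R' ^ 2) ≤ ((n : ℝ) + 1)⁻¹ * (β * R' ^ 2) :=
        mul_le_mul_of_nonneg_right hcle (by positivity)
      have hNi : ((n : ℝ) + 1) * ((n : ℝ) + 1)⁻¹ = 1 := mul_inv_cancel₀ hN.ne'
      have hlt : ((n : ℝ) + 1)⁻¹ * (β * R' ^ 2) < ε / 2 := by
        rw [inv_mul_lt_iff₀ hN]
        linarith
      nlinarith
    have hbnd : hausdorffDist K D ≤ ((n : ℝ) + 1)⁻¹ ^ 3 * β * R' ^ 2 := hDdist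
    rw [hδdef] at hdBK
    linarith
  exact ⟨⋃ n, F n,
    fun D hD => by
      obtain ⟨n, hn⟩ := mem_iUnion.1 hD
      obtain ⟨h1, h2, h3⟩ := hgood n D hn
      exact ⟨h1, h2, h3⟩,
    ⟨F, rfl, fun n =>
      ⟨fun D hD => ⟨(hgood n D hD).1, interior_subset (hgood n D hD).2.1⟩,
        hclosed n⟩⟩,
    hdense⟩
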